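/- Let K be a field of characteristic 0, L = K(√d) a quadratic extension, σ the nontrivial element of Gal(L/K). For diagonal matrices D_u, D_v, D ∈ H(L) (the diagonal torus in GL_n(L) modulo center, i.e. considered up to scalars via the adjoint action), the relation Ad_{D_v}χ = Ad_D^{-1} Ad_{D_u} χ Ad_{σ(D)} (where χ(x) = −x^t is the Chevalley automorphism of sl_n and D^t = D) holds if and only if Ad_{D_u} = Ad_{D·σ(D)·D_v}. Consequently, two such cocycles Ad_{D_u}χ and Ad_{D_v}χ are equivalent (via some Ad_D, D ∈ H(L)) if and only if each entry (up to common scalar) of D_u differs from the corresponding entry of D_v by an element of the norm group N_{L/K}(L*). -/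

import Mathlib

open Matrix

/-- Conjugation `Ad_D : x ↦ D x D⁻¹` by the invertible diagonal matrix with entries `d`. -/
noncomputable def AdDiag {L : Type*} [Field L] {n : ℕ} (d : Fin n → Lˣ)
    (x : Matrix (Fin n) (Fin n) L) : Matrix (Fin n) (Fin n) L :=
  Matrix.diagonal (fun i => (d i : L)) * x * Matrix.diagonal (fun i => (((d i)⁻¹ : Lˣ) : L))

/-- The Chevalley automorphism `χ : x ↦ -xᵀ`. -/
def chev {L : Type*} [Field L] {n : ℕ} (x : Matrix (Fin n) (Fin n) L) :
    Matrix (Fin n) (Fin n) L := -xᵀ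

/-- let `L = K(√d)` be a quadratic extension of a field `K` of characteristic
`0` with nontrivial Galois automorphism `σ`.  For diagonal matrices `D_u, D_v, D` the
relation `Ad_{D_v}χ = Ad_D⁻¹ Ad_{D_u} χ Ad_{σ(D)}` holds iff
`Ad_{D_u} = Ad_{D·σ(D)·D_v}`; consequently such a `D` exists iff each entry of `D_u` differs
from the corresponding entry of `D_v` by a common scalar times an element of the norm group
`N_{L/K}(L*)`. -/
lemma adDiag_apply {L : Type*} [Field L] {n : ℕ} (d : Fin n → Lˣ)
    (x : Matrix (Fin n) (Fin n) L) (i j : Fin n) :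
    AdDiag d x i j = (d i : L) * x i j * ((d j : L))⁻¹ := by
  simp [AdDiag, Matrix.mul_diagonal, Matrix.diagonal_mul]

lemma key2 {L : Type*} [Field L] {n : ℕ} (du w : Fin n → Lˣ) :
    (∀ x : Matrix (Fin n) (Fin n) L, AdDiag du x = AdDiag w x) ↔
      ∀ i j, (du i : L) * (w j : L) = (du j : L) * (w i : L) := by
  constructor
  · intro h i j
    have h1 := congrFun (congrFun (h (Matrix.single i j 1)) i) j
    simp [adDiag_apply] at h1
    field_simp at h1
    linear_combination h1
  · intro h x
    ext i j
    simp only [adDiag_apply]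
    field_simp
    linear_combination (x i j) * h i j

lemma key1 {L : Type*} [Field L] {n : ℕ} (du dv d e : Fin n → Lˣ) :
    (∀ x : Matrix (Fin n) (Fin n) L,
        AdDiag dv (chev x) = AdDiag (fun i => (d i)⁻¹) (AdDiag du (chev (AdDiag e x)))) ↔
      ∀ i j, (du i : L) * ((d j : L) * (e j : L) * (dv j : L)) =
        (du j : L) * ((d i : L) * (e i : L) * (dv i : L)) := by
  constructor
  · intro h i j
    have h1 := congrFun (congrFun (h (Matrix.single j i 1)) i) j
    simp [adDiag_apply, chev] at h1
    field_simp at h1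
    linear_combination -h1
  · intro h x
    ext i j
    simp only [adDiag_apply, chev, Matrix.neg_apply, Matrix.transpose_apply, Units.val_inv_eq_inv_val]
    field_simp
    linear_combination (x j i) * h i j

theorem stmt14 {K L : Type*} [Field K] [Field L] [Algebra K L] [CharZero K]
    (hquad : Module.finrank K L = 2) (σ : L ≃ₐ[K] L) (hσ : σ ≠ (AlgEquiv.refl : L ≃ₐ[K] L))
    {n : ℕ} (du dv : Fin n → Lˣ) :
    (∀ d : Fin n → Lˣ,
      (∀ x : Matrix (Fin n) (Fin n) L,
          AdDiag dv (chev x) =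
            AdDiag (fun i => (d i)⁻¹)
              (AdDiag du (chev (AdDiag
                (fun i => Units.map σ.toAlgHom.toRingHom.toMonoidHom (d i)) x)))) ↔
        (∀ x : Matrix (Fin n) (Fin n) L,
          AdDiag du x =
            AdDiag (fun i =>
              d i * Units.map σ.toAlgHom.toRingHom.toMonoidHom (d i) * dv i) x)) ∧
    ((∃ d : Fin n → Lˣ,
      ∀ x : Matrix (Fin n) (Fin n) L,
        AdDiag dv (chev x) =
          AdDiag (fun i => (d i)⁻¹)
            (AdDiag du (chev (AdDiag
              (fun i => Units.map σ.toAlgHom.toRingHom.toMonoidHom (d i)) x)))) ↔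
      (∃ c : Lˣ, ∀ i : Fin n, ∃ y : Lˣ,
        (du i : L) = (c : L) * ((y : L) * σ (y : L)) * (dv i : L))) := by
  classical
  have hmap : ∀ u : Lˣ, ((Units.map σ.toAlgHom.toRingHom.toMonoidHom u : Lˣ) : L) = σ (u : L) :=
    fun u => rfl
  constructor
  · intro d
    rw [key1 du dv d _, key2 du (fun i => d i * Units.map σ.toAlgHom.toRingHom.toMonoidHom (d i) * dv i)]
    simp only [Units.val_mul, hmap]
  · rw [exists_congr (fun d => key1 du dv d
      (fun i => Units.map σ.toAlgHom.toRingHom.toMonoidHom (d i)))]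
    constructor
    · rintro ⟨d, h⟩
      rcases isEmpty_or_nonempty (Fin n) with hn | hn
      · exact ⟨1, fun i => hn.elim i⟩
      · set i0 : Fin n := Classical.arbitrary (Fin n)
        refine ⟨du i0 * (d i0 * Units.map σ.toAlgHom.toRingHom.toMonoidHom (d i0) * dv i0)⁻¹,
          fun i => ⟨d i, ?_⟩⟩
        have h1 := h i i0
        simp only [hmap] at h1
        push_cast [hmap]
        field_simp
        linear_combination h1
    · rintro ⟨c, h⟩
      choose y hy using h
      refine ⟨y, fun i j => ?_⟩
      simp only [hmap]
      rw [hy i, hy j]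
      ring
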